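/- arXiv:2306.16848 — 2 statements merged into one kernel-verified Lean document; each statement's English description precedes it below -/
import Mathlib

section
/- Fix n ≥ 1. Let λ, μ : (ZMod n)² → ℝ be probability vectors and let J_λ = Σ_{a,b} λ_{ab} |Φ_ab⟩⟨Φ_ab| and J_μ = Σ_{a,b} μ_{ab} |Φ_ab⟩⟨Φ_ab| be the corresponding Bell-diagonal n²×n² Choi matrices (Choi states of Weyl-covariant channels). Then the following are equivalent: (1) J_μ lies in the convex hull of { (W_ab ⊗ W_cd) J_λ (W_ab ⊗ W_cd)† : a,b,c,d ∈ ZMod n } (the Choi-state form of an allowed operation built from pre- and post-processing Weyl-covariant channels with shared randomness); (2) there exists a probability vector (p_{αβ})_{α,β ∈ ZMod n} such that μ = Σ_{α,β} p_{αβ} (X_n^α ⊗ X_n^β) λ, i.e. μ is a convex combination of local cyclic permutations of λ. -/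
open Matrix Kronecker

noncomputable section

/-- A probability vector: nonnegative entries summing to 1. -/
def IsProbVec {ι : Type*} [Fintype ι] (p : ι → ℝ) : Prop :=
  (∀ i, 0 ≤ p i) ∧ ∑ i, p i = 1

/-- The discrete Weyl operators on `ℂⁿ`: `W_ab = Σ_c ω^{bc} |a+c⟩⟨c|`, `ω = e^{2πi/n}`. -/
def Wd (n : ℕ) [NeZero n] (a b : ZMod n) : Matrix (ZMod n) (ZMod n) ℂ :=
  Matrix.of fun r c =>
    if r = a + c then Complex.exp (2 * Real.pi * Complex.I / n) ^ (b.val * c.val) else 0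

/-- The generalized Bell basis vector `|Φ_ab⟩ = (I ⊗ W_ab)|Φ_00⟩`,
`|Φ_00⟩ = (1/√n) Σ_i |ii⟩`; explicitly `Φ_ab (i,j) = (1/√n) (W_ab) j i`. -/
def belld (n : ℕ) [NeZero n] (a b : ZMod n) : ZMod n × ZMod n → ℂ :=
  fun p => ((Real.sqrt n : ℝ) : ℂ)⁻¹ * Wd n a b p.2 p.1

/-- The generalized Bell projector `|Φ_ab⟩⟨Φ_ab|`. -/
def bellProjd (n : ℕ) [NeZero n] (a b : ZMod n) :
    Matrix (ZMod n × ZMod n) (ZMod n × ZMod n) ℂ :=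
  Matrix.of fun p q => belld n a b p * (starRingEnd ℂ) (belld n a b q)

/-- The Bell-diagonal Choi matrix `J_λ = Σ_{a,b} λ_{ab} |Φ_ab⟩⟨Φ_ab|`. -/
def choid (n : ℕ) [NeZero n] (lam : ZMod n × ZMod n → ℝ) :
    Matrix (ZMod n × ZMod n) (ZMod n × ZMod n) ℂ :=
  ∑ ab : ZMod n × ZMod n, lam ab • bellProjd n ab.1 ab.2

set_option linter.unusedSectionVars false

variable (n : ℕ) [NeZero n]

def chi (x : ZMod n) : ℂ := Complex.exp (2 * Real.pi * Complex.I / n) ^ x.val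

lemma chi_pow_n : Complex.exp (2 * Real.pi * Complex.I / n) ^ n = 1 :=
  (Complex.isPrimitiveRoot_exp n (NeZero.ne n)).pow_eq_one

lemma omega_pow_mod (m : ℕ) :
    Complex.exp (2 * Real.pi * Complex.I / n) ^ (m % n) =
    Complex.exp (2 * Real.pi * Complex.I / n) ^ m := by
  conv_rhs => rw [← Nat.mod_add_div m n]
  rw [pow_add, pow_mul, chi_pow_n, one_pow, mul_one]

lemma chi_add (x y : ZMod n) : chi n (x + y) = chi n x * chi n y := by
  rw [chi, chi, chi, ZMod.val_add, omega_pow_mod, pow_add]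

lemma chi_zero : chi n 0 = 1 := by simp [chi]

lemma chi_mul_val (x y : ZMod n) :
    chi n (x * y) = Complex.exp (2 * Real.pi * Complex.I / n) ^ (x.val * y.val) := by
  rw [chi, ZMod.val_mul, omega_pow_mod]

lemma abs_omega : ‖Complex.exp (2 * Real.pi * Complex.I / n)‖ = 1 := by
  have : (2 * Real.pi * Complex.I / n) = ((2 * Real.pi / n : ℝ) : ℂ) * Complex.I := by
    push_cast; ring
  rw [this, Complex.norm_exp_ofReal_mul_I]

lemma abs_chi (x : ZMod n) : ‖chi n x‖ = 1 := by
  rw [chi, norm_pow, abs_omega, one_pow]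

lemma chi_mul_conj (x : ZMod n) : chi n x * (starRingEnd ℂ) (chi n x) = 1 := by
  rw [Complex.mul_conj, Complex.normSq_eq_norm_sq, abs_chi]; norm_num

lemma conj_chi (x : ZMod n) : (starRingEnd ℂ) (chi n x) = chi n (-x) := by
  have h2 : chi n (-x) * chi n x = 1 := by rw [← chi_add]; simp [chi_zero]
  rw [← Complex.inv_eq_conj (abs_chi n x)]
  exact (eq_inv_of_mul_eq_one_left h2).symm

lemma Wd_eq (a b : ZMod n) :
    Wd n a b = Matrix.of fun r c => if c = r - a then chi n (b * c) else 0 := by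
  ext r c
  rw [Wd, Matrix.of_apply, Matrix.of_apply, ← chi_mul_val]
  apply if_congr _ rfl rfl
  constructor <;> intro h <;> linear_combination -h

lemma belld_eq (e f : ZMod n) :
    belld n e f = fun p => ((Real.sqrt n : ℝ) : ℂ)⁻¹ *
      (if p.2 = e + p.1 then chi n (f * p.1) else 0) := by
  funext p
  rw [belld, Wd, Matrix.of_apply, ← chi_mul_val]

lemma ite_swap {α : Type*} [Zero α] (P Q : Prop) [Decidable P] [Decidable Q] (a : α) :
    (if P then if Q then a else 0 else 0) = if Q then if P then a else 0 else 0 := by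
  split_ifs <;> rfl

lemma Wkron_mulVec (a b c d e f : ZMod n) :
    (Wd n a b ⊗ₖ Wd n c d).mulVec (belld n e f) =
      chi n (d * e - a * (f + b + d)) • belld n (e + c - a) (f + b + d) := by
  funext p
  obtain ⟨i, j⟩ := p
  simp only [Matrix.mulVec, dotProduct, Fintype.sum_prod_type, kroneckerMap_apply,
    belld_eq, Wd_eq, Matrix.of_apply, Pi.smul_apply, smul_eq_mul, ite_mul, mul_ite,
    mul_zero, zero_mul, Finset.sum_ite_eq', Finset.mem_univ, if_true]
  rw [Finset.sum_congr rfl fun x _ => ite_swap _ _ _]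
  rw [Finset.sum_ite_eq', if_pos (Finset.mem_univ _)]
  by_cases h : j = e + c - a + i
  · subst h
    rw [if_pos (by ring), if_pos rfl]
    have s0 : ∀ x y z w : ℂ, x * y * (z * w) = z * (x * y * w) := by intros; ring
    rw [s0, ← chi_add, ← chi_add,
      show chi n (d * e - a * (f + b + d)) * ((((Real.sqrt n : ℝ)) : ℂ)⁻¹ * chi n ((f + b + d) * i))
        = (((Real.sqrt n : ℝ)) : ℂ)⁻¹ * (chi n (d * e - a * (f + b + d)) * chi n ((f + b + d) * i)) from by ring,
      ← chi_add]
    congr 2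
    ring
  · rw [if_neg, if_neg h]
    intro h'
    exact h (by linear_combination -h')

lemma conj_outer (M : Matrix (ZMod n × ZMod n) (ZMod n × ZMod n) ℂ)
    (v : ZMod n × ZMod n → ℂ) :
    M * (Matrix.of fun p q => v p * (starRingEnd ℂ) (v q)) * Mᴴ
      = Matrix.of fun p q => M.mulVec v p * (starRingEnd ℂ) (M.mulVec v q) := by
  ext p q
  simp only [Matrix.mul_apply, Matrix.of_apply, Matrix.conjTranspose_apply,
    Matrix.mulVec, dotProduct, _root_.map_sum, _root_.map_mul, Finset.sum_mul,
    Finset.mul_sum]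
  apply Finset.sum_congr rfl; intro r _
  apply Finset.sum_congr rfl; intro s _
  simp only [Matrix.conjTranspose_apply, RCLike.star_def]
  ring

lemma conj_proj (a b c d e f : ZMod n) :
    (Wd n a b ⊗ₖ Wd n c d) * bellProjd n e f * (Wd n a b ⊗ₖ Wd n c d)ᴴ
      = bellProjd n (e + c - a) (f + b + d) := by
  rw [bellProjd, conj_outer, Wkron_mulVec]
  ext p q
  simp only [Matrix.of_apply, bellProjd, Pi.smul_apply, smul_eq_mul, _root_.map_mul]
  rw [mul_mul_mul_comm, chi_mul_conj, one_mul]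

lemma char_sum (c : ZMod n) : ∑ i : ZMod n, chi n (c * i) = if c = 0 then (n : ℂ) else 0 := by
  by_cases hc : c = 0
  · simp [hc, chi_zero, Finset.card_univ, ZMod.card]
  · rw [if_neg hc]
    have hrw : ∀ i : ZMod n, chi n (c * i) = (chi n c) ^ i.val := by
      intro i
      rw [chi_mul_val, chi, ← pow_mul]
    simp only [hrw]
    have hbij : (∑ i : ZMod n, chi n c ^ i.val) = ∑ k ∈ Finset.range n, chi n c ^ k := by
      refine Finset.sum_nbij' (fun i => i.val) (fun k => (k : ZMod n)) ?_ ?_ ?_ ?_ ?_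
      · intro a _; exact Finset.mem_range.2 (ZMod.val_lt a)
      · intro a _; exact Finset.mem_univ _
      · intro a _; exact ZMod.natCast_rightInverse a
      · intro a ha; exact ZMod.val_cast_of_lt (Finset.mem_range.1 ha)
      · intro a _; rfl
    rw [hbij]
    have hz1 : chi n c ≠ 1 := by
      intro h1
      rw [chi] at h1
      have hd := ((Complex.isPrimitiveRoot_exp n (NeZero.ne n)).pow_eq_one_iff_dvd c.val).1 h1
      exact hc ((ZMod.val_eq_zero c).1 (Nat.eq_zero_of_dvd_of_lt hd (ZMod.val_lt c)))
    have hpow : chi n c ^ n = 1 := by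
      rw [chi, ← pow_mul, mul_comm c.val n, pow_mul, chi_pow_n, one_pow]
    rw [geom_sum_eq hz1, hpow, sub_self, zero_div]

lemma bell_ortho (a b e f : ZMod n) :
    ∑ p : ZMod n × ZMod n, (starRingEnd ℂ) (belld n a b p) * belld n e f p
      = if a = e ∧ b = f then 1 else 0 := by
  have hn : ((n : ℝ) : ℂ) ≠ 0 := by
    simp [Nat.cast_ne_zero, NeZero.ne n]
  have hss : (((Real.sqrt n : ℝ) : ℂ))⁻¹ * (((Real.sqrt n : ℝ) : ℂ))⁻¹ = ((n : ℝ) : ℂ)⁻¹ := by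
    rw [← mul_inv]
    norm_cast
    rw [Real.mul_self_sqrt (Nat.cast_nonneg n)]
  simp only [belld_eq, Fintype.sum_prod_type, _root_.map_mul, map_inv₀,
    Complex.conj_ofReal, apply_ite, map_zero, conj_chi, ite_mul, mul_ite, mul_zero,
    zero_mul, Finset.sum_ite_eq', Finset.mem_univ, if_true]
  simp only [add_left_inj]
  by_cases hae : a = e
  · subst hae
    have hterm : ∀ x : ZMod n,
        (((Real.sqrt n : ℝ) : ℂ))⁻¹ * chi n (-(b * x)) * ((((Real.sqrt n : ℝ) : ℂ))⁻¹ * chi n (f * x))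
          = ((n : ℝ) : ℂ)⁻¹ * chi n ((f - b) * x) := by
      intro x
      rw [show (f - b) * x = -(b * x) + f * x by ring, chi_add, ← hss]
      ring
    simp only [if_pos rfl, hterm]
    by_cases hbf : b = f
    · subst hbf
      simp only [if_true]
      rw [← Finset.mul_sum, char_sum, if_pos (sub_self b)]
      push_cast
      exact inv_mul_cancel₀ (by exact_mod_cast hn)
    · rw [if_neg (by simp [hbf])]
      simp only [if_true]
      rw [← Finset.mul_sum, char_sum, if_neg (sub_ne_zero.2 (Ne.symm hbf)), mul_zero]
  · simp [hae, Ne.symm hae]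

lemma choid_conj (lam : ZMod n × ZMod n → ℝ) (a b c d : ZMod n) :
    (Wd n a b ⊗ₖ Wd n c d) * choid n lam * (Wd n a b ⊗ₖ Wd n c d)ᴴ
      = choid n (fun ab => lam (ab.1 - (c - a), ab.2 - (b + d))) := by
  rw [choid]
  simp only [Matrix.mul_sum, Matrix.sum_mul, Matrix.mul_smul, Matrix.smul_mul, conj_proj]
  rw [choid]
  apply Fintype.sum_equiv (Equiv.addRight ((c - a, b + d) : ZMod n × ZMod n))
  intro ef
  obtain ⟨e, f⟩ := ef
  show lam (e, f) • bellProjd n (e + c - a) (f + b + d)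
      = lam (e + (c - a) - (c - a), f + (b + d) - (b + d)) • bellProjd n (e + (c - a)) (f + (b + d))
  rw [show e + c - a = e + (c - a) by ring, show f + b + d = f + (b + d) by ring,
    add_sub_cancel_right, add_sub_cancel_right]

lemma extract (ν : ZMod n × ZMod n → ℝ) (a b : ZMod n) :
    ∑ p : ZMod n × ZMod n, ∑ q : ZMod n × ZMod n,
        (starRingEnd ℂ) (belld n a b p) * choid n ν p q * belld n a b q = (ν (a, b) : ℂ) := by
  simp only [choid, Matrix.sum_apply, Matrix.smul_apply, bellProjd, Matrix.of_apply,
    Complex.real_smul, Finset.sum_mul, Finset.mul_sum]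
  rw [Finset.sum_congr rfl fun p _ => Finset.sum_comm, Finset.sum_comm]
  have hmain : ∀ ef : ZMod n × ZMod n,
      (∑ p : ZMod n × ZMod n, ∑ q : ZMod n × ZMod n,
        (starRingEnd ℂ) (belld n a b p) * ((ν ef : ℂ) * (belld n ef.1 ef.2 p * (starRingEnd ℂ) (belld n ef.1 ef.2 q))) * belld n a b q)
      = (ν ef : ℂ) * ((∑ p : ZMod n × ZMod n, (starRingEnd ℂ) (belld n a b p) * belld n ef.1 ef.2 p)
          * (∑ q : ZMod n × ZMod n, (starRingEnd ℂ) (belld n ef.1 ef.2 q) * belld n a b q)) := by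
    intro ef
    rw [Finset.sum_mul_sum, Finset.mul_sum]
    apply Finset.sum_congr rfl; intro p _
    rw [Finset.mul_sum]
    apply Finset.sum_congr rfl; intro q _
    ring
  rw [Finset.sum_congr rfl fun ef _ => hmain ef]
  simp only [bell_ortho]
  rw [Finset.sum_eq_single ((a, b) : ZMod n × ZMod n)]
  · simp
  · intro x _ hx
    have : ¬(x.1 = a ∧ x.2 = b) := by
      intro ⟨h1, h2⟩
      exact hx (Prod.ext h1 h2)
    simp [this]
  · intro h
    exact absurd (Finset.mem_univ _) h

lemma choid_inj (ν ν' : ZMod n × ZMod n → ℝ) (h : choid n ν = choid n ν') : ν = ν' := by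
  funext ab
  obtain ⟨a, b⟩ := ab
  have h1 := extract n ν a b
  rw [h, extract] at h1
  exact_mod_cast h1.symm

lemma choid_sum {ι : Type*} (t : Finset ι) (g : ι → (ZMod n × ZMod n → ℝ)) (w : ι → ℝ) :
    ∑ i ∈ t, w i • choid n (g i) = choid n (fun ab => ∑ i ∈ t, w i * g i ab) := by
  simp only [choid, Finset.smul_sum, smul_smul]
  rw [Finset.sum_comm]
  apply Finset.sum_congr rfl; intro ab _
  rw [Finset.sum_smul]

/-- **Result 3.** For Bell-diagonal Choi states of Weyl-covariant channels with
eigenvalue probability vectors `λ, μ`: `J_μ` lies in the convex hull of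
`{(W_ab ⊗ W_cd) J_λ (W_ab ⊗ W_cd)†}` iff `μ` is a convex combination of local
cyclic permutations of `λ`. -/
theorem result3 (n : ℕ) [NeZero n] (lam mu : ZMod n × ZMod n → ℝ)
    (hlam : IsProbVec lam) (hmu : IsProbVec mu) :
    choid n mu ∈ convexHull ℝ
        { K : Matrix (ZMod n × ZMod n) (ZMod n × ZMod n) ℂ |
          ∃ a b c d : ZMod n,
            K = (Wd n a b ⊗ₖ Wd n c d) * choid n lam * (Wd n a b ⊗ₖ Wd n c d)ᴴ } ↔
      ∃ p : ZMod n × ZMod n → ℝ, IsProbVec p ∧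
        ∀ ab : ZMod n × ZMod n,
          mu ab = ∑ αβ : ZMod n × ZMod n, p αβ * lam (ab.1 + αβ.1, ab.2 + αβ.2) := by
  constructor
  · intro h
    rw [convexHull_eq] at h
    obtain ⟨ι, t, w, z, hw0, hw1, hz, hx⟩ := h
    have hz' : ∀ i : {x // x ∈ t}, ∃ σ : ZMod n × ZMod n,
        z i.1 = choid n (fun ab => lam (ab.1 - σ.1, ab.2 - σ.2)) := by
      rintro ⟨i, hi⟩
      obtain ⟨a, b, c, d, hK⟩ := hz i hi
      exact ⟨(c - a, b + d), by rw [hK, choid_conj]⟩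
    choose σ hσ using hz'
    have hsum : choid n mu
        = choid n (fun ab => ∑ i ∈ t.attach, w i.1 * lam (ab.1 - (σ i).1, ab.2 - (σ i).2)) := by
      rw [← choid_sum, ← hx, Finset.centerMass_eq_of_sum_1 t z hw1,
        ← Finset.sum_attach t (fun i => w i • z i)]
      apply Finset.sum_congr rfl
      intro i _
      rw [hσ i]
    have hmu' := congrFun (choid_inj n _ _ hsum)
    refine ⟨fun αβ => ∑ i ∈ t.attach.filter (fun i => -σ i = αβ), w i.1, ⟨?_, ?_⟩, ?_⟩
    · intro αβ
      apply Finset.sum_nonneg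
      intro i _
      exact hw0 i.1 i.2
    · rw [Finset.sum_fiberwise t.attach (fun i => -σ i) (fun i => w i.1),
        Finset.sum_attach t w]
      exact hw1
    · intro ab
      rw [hmu' ab]
      rw [← Finset.sum_fiberwise t.attach (fun i => -σ i)
        (fun i => w i.1 * lam (ab.1 - (σ i).1, ab.2 - (σ i).2))]
      apply Finset.sum_congr rfl
      intro αβ _
      rw [Finset.sum_mul]
      apply Finset.sum_congr rfl
      intro i hi
      have hgi : -σ i = αβ := (Finset.mem_filter.1 hi).2
      rw [← hgi]
      congr 1
      simp [Prod.ext_iff, sub_eq_add_neg]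
  · rintro ⟨p, ⟨hp0, hp1⟩, hmuP⟩
    have hrep : choid n mu
        = ∑ αβ : ZMod n × ZMod n, p αβ •
            ((Wd n αβ.1 (-αβ.2) ⊗ₖ Wd n 0 0) * choid n lam * (Wd n αβ.1 (-αβ.2) ⊗ₖ Wd n 0 0)ᴴ) := by
      have : ∀ αβ : ZMod n × ZMod n,
          (Wd n αβ.1 (-αβ.2) ⊗ₖ Wd n 0 0) * choid n lam * (Wd n αβ.1 (-αβ.2) ⊗ₖ Wd n 0 0)ᴴ
            = choid n (fun ab => lam (ab.1 + αβ.1, ab.2 + αβ.2)) := by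
        intro αβ
        rw [choid_conj]
        congr 1
        funext ab
        congr 1 <;> ring
      simp only [this]
      rw [choid_sum]
      exact congrArg (choid n) (funext fun ab => (hmuP ab).symm) |>.symm ▸ rfl
    rw [hrep, ← Finset.centerMass_eq_of_sum_1 _ _ hp1]
    apply Finset.centerMass_mem_convexHull
    · intro αβ _; exact hp0 αβ
    · rw [hp1]; norm_num
    · intro αβ _
      exact ⟨αβ.1, -αβ.2, 0, 0, rfl⟩

end
end

section
/- Fix n ≥ 1. For all a,b,c,d ∈ ZMod n and all (k,l), (p,q) ∈ (ZMod n)²: |⟨Φ_kl| (W_cd ⊗ W_ef) |Φ_pq⟩|² equals 1 if k = p + e − c and l = q + d + f (in ZMod n), and equals 0 otherwise, where here the pre-processing Weyl operator is W_cd and the post-processing one is W_ef. Equivalently, the n²×n² matrix B^{(cd,ef)} with entries B_{(kl),(pq)} = |⟨Φ_kl| (W_cd ⊗ W_ef) |Φ_pq⟩|² equals the local cyclic permutation matrix X_n^{e−c} ⊗ X_n^{d+f}. -/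
open Matrix Kronecker

noncomputable section

/-- The real `n²×n²` local cyclic permutation matrix `X_n^α ⊗ X_n^β`, with entries
`δ_{k, p+α} δ_{l, q+β}`. -/
def localCycMat (n : ℕ) (α β : ZMod n) :
    Matrix (ZMod n × ZMod n) (ZMod n × ZMod n) ℝ :=
  Matrix.of fun r s => if r.1 = s.1 + α ∧ r.2 = s.2 + β then 1 else 0

set_option linter.unusedSectionVars false

variable (n : ℕ) [NeZero n]

def zt (n : ℕ) : ℂ := Complex.exp (2 * Real.pi * Complex.I / n)

lemma zt_prim : IsPrimitiveRoot (zt n) n := Complex.isPrimitiveRoot_exp n (NeZero.ne n)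

lemma zt_pow_n : (zt n) ^ n = 1 := (zt_prim n).pow_eq_one

lemma zt_pow_mod (a : ℕ) : (zt n) ^ a = (zt n) ^ (a % n) := by
  conv_lhs => rw [← Nat.div_add_mod a n]
  rw [pow_add, pow_mul, zt_pow_n, one_pow, one_mul]

def ee (x : ZMod n) : ℂ := (zt n) ^ x.val

lemma ee_add (x y : ZMod n) : ee n (x + y) = ee n x * ee n y := by
  rw [ee, ee, ee, ← pow_add, ZMod.val_add, ← zt_pow_mod]

lemma ee_zero : ee n 0 = 1 := by simp [ee]

lemma ee_natmul (b c : ZMod n) : (zt n) ^ (b.val * c.val) = ee n (b * c) := by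
  rw [ee, ZMod.val_mul, ← zt_pow_mod]

lemma zt_abs : ‖zt n‖ = 1 :=
  Complex.norm_eq_one_of_pow_eq_one (zt_pow_n n) (NeZero.ne n)

lemma ee_normSq (x : ZMod n) : Complex.normSq (ee n x) = 1 := by
  rw [Complex.normSq_eq_norm_sq, ee, norm_pow, zt_abs, one_pow, one_pow]

lemma ee_mul_neg (x : ZMod n) : ee n x * ee n (-x) = 1 := by
  rw [← ee_add]; simp [ee_zero]

lemma ee_ne_zero (x : ZMod n) : ee n x ≠ 0 := by
  intro h
  have := ee_mul_neg n x
  rw [h, zero_mul] at this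
  exact one_ne_zero this.symm

lemma ee_conj (x : ZMod n) : (starRingEnd ℂ) (ee n x) = ee n (-x) := by
  have h1 : ee n x * (starRingEnd ℂ) (ee n x) = 1 := by
    rw [Complex.mul_conj]; exact_mod_cast ee_normSq n x
  exact mul_left_cancel₀ (ee_ne_zero n x) (h1.trans (ee_mul_neg n x).symm)

def eeChar (m : ZMod n) : AddChar (ZMod n) ℂ where
  toFun := fun x => ee n (m * x)
  map_zero_eq_one' := by simp [ee_zero]
  map_add_eq_mul' := fun a b => by show ee n (m * (a + b)) = ee n (m * a) * ee n (m * b); rw [mul_add, ee_add]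

lemma ee_one_ne_one (m : ZMod n) (hm : m ≠ 0) : ee n m ≠ 1 := by
  rw [ee]
  apply (zt_prim n).pow_ne_one_of_pos_of_lt
  · exact (fun h => hm (by rwa [ZMod.val_eq_zero] at h))
  · exact ZMod.val_lt m

lemma ee_sum (m : ZMod n) : ∑ s : ZMod n, ee n (m * s) = if m = 0 then (n : ℂ) else 0 := by
  split_ifs with h
  · simp [h, ee_zero, Finset.card_univ]
  · have : ∑ s : ZMod n, eeChar n m s = 0 := by
      rw [AddChar.sum_eq_zero_iff_ne_zero, AddChar.ne_zero_iff]
      exact ⟨1, by simpa [eeChar] using ee_one_ne_one n m h⟩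
    simpa [eeChar] using this

lemma Wd_apply' (a b r s : ZMod n) :
    Wd n a b r s = if s = r - a then ee n (b * s) else 0 := by
  have h : (r = a + s) = (s = r - a) :=
    propext ⟨fun h => by rw [h]; ring, fun h => by rw [h]; ring⟩
  show (if r = a + s then zt n ^ (b.val * s.val) else 0) = _
  simp only [ee_natmul, h]

lemma belld_apply (a b : ZMod n) (ij : ZMod n × ZMod n) :
    belld n a b ij = ((Real.sqrt n : ℝ) : ℂ)⁻¹ * if ij.2 = a + ij.1 then ee n (b * ij.1) else 0 := by
  show ((Real.sqrt n : ℝ) : ℂ)⁻¹ * (if ij.2 = a + ij.1 then zt n ^ (b.val * ij.1.val) else 0) = _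
  rw [ee_natmul]

lemma amp (c d e f k l p q : ZMod n) :
    star (belld n k l) ⬝ᵥ ((Wd n c d ⊗ₖ Wd n e f) *ᵥ belld n p q) =
      if k = p + e - c ∧ l = q + d + f then ee n (f * p - (q + d + f) * c) else 0 := by
  simp only [dotProduct, mulVec, Pi.star_apply, RCLike.star_def, belld_apply, kroneckerMap_apply,
    Wd_apply', Fintype.sum_prod_type, mul_ite, ite_mul, mul_zero, zero_mul, _root_.map_mul, apply_ite (starRingEnd ℂ),
    map_zero, ee_conj, Finset.sum_ite_eq', Finset.mem_univ, if_true]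
  have hc : ∀ u v : ZMod n, (p + u = v) = (u = v - p) :=
    fun u v => propext ⟨fun h => by rw [← h]; ring, fun h => by rw [h]; ring⟩
  simp only [hc, Finset.sum_ite_eq', Finset.mem_univ, if_true]
  have hk : ∀ x : ZMod n, (k + x - e - p = x - c) = (k = p + e - c) :=
    fun x => propext ⟨fun h => by linear_combination h, fun h => by linear_combination h⟩
  simp only [hk]
  by_cases hke : k = p + e - c
  · subst hke
    simp only [eq_self_iff_true, if_true, ite_true, true_and]
    have c0 : ∀ x : ZMod n, p + e - c + x - e - p = x - c := fun x => by ring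
    simp only [c0]
    have hterm : ∀ x : ZMod n,
        (starRingEnd ℂ) (((Real.sqrt n : ℝ) : ℂ))⁻¹ * ee n (-(l * x)) *
          (ee n (d * (x - c)) * ee n (f * (p + (x - c))) *
            ((((Real.sqrt n : ℝ) : ℂ))⁻¹ * ee n (q * (x - c)))) =
        ((((Real.sqrt n : ℝ) : ℂ))⁻¹ * (((Real.sqrt n : ℝ) : ℂ))⁻¹) *
          (ee n (f * p - (q + d + f) * c) * ee n ((d + f + q - l) * x)) := by
      intro x
      rw [map_inv₀, Complex.conj_ofReal]
      calc (((Real.sqrt n : ℝ) : ℂ))⁻¹ * ee n (-(l * x)) *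
          (ee n (d * (x - c)) * ee n (f * (p + (x - c))) *
            ((((Real.sqrt n : ℝ) : ℂ))⁻¹ * ee n (q * (x - c)))) =
          ((((Real.sqrt n : ℝ) : ℂ))⁻¹ * (((Real.sqrt n : ℝ) : ℂ))⁻¹) *
          (ee n (-(l * x)) * ee n (d * (x - c)) * ee n (f * (p + (x - c))) *
            ee n (q * (x - c))) := by ring
        _ = _ := by
          simp only [← ee_add]
          congr 2
          ring
    simp only [hterm]
    rw [← Finset.mul_sum, ← Finset.mul_sum, ee_sum]
    have hl : (d + f + q - l = 0) = (l = q + d + f) :=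
      propext ⟨fun h => by linear_combination -h, fun h => by rw [h]; ring⟩
    simp only [hl]
    have hn : ((n : ℂ)) ≠ 0 := Nat.cast_ne_zero.mpr (NeZero.ne n)
    have hsq : (((Real.sqrt n : ℝ) : ℂ)) * (((Real.sqrt n : ℝ) : ℂ)) = (n : ℂ) := by
      norm_cast
      exact_mod_cast Real.mul_self_sqrt (Nat.cast_nonneg n)
    have hsq' : (((Real.sqrt n : ℝ) : ℂ))⁻¹ * (((Real.sqrt n : ℝ) : ℂ))⁻¹ * (n : ℂ) = 1 := by
      rw [← mul_inv, hsq, inv_mul_cancel₀ hn]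
    split_ifs with hlq
    · rw [show (((Real.sqrt n : ℝ) : ℂ))⁻¹ * (((Real.sqrt n : ℝ) : ℂ))⁻¹ *
          (ee n (f * p - (q + d + f) * c) * (n : ℂ)) =
          ((((Real.sqrt n : ℝ) : ℂ))⁻¹ * (((Real.sqrt n : ℝ) : ℂ))⁻¹ * (n : ℂ)) *
            ee n (f * p - (q + d + f) * c) from by ring, hsq', one_mul]
    · simp
  · simp [hke]


/-- `|⟨Φ_kl| (W_cd ⊗ W_ef) |Φ_pq⟩|²` equals `1` if `k = p + e − c` and
`l = q + d + f`, and `0` otherwise; equivalently, the matrix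
`B^{(cd,ef)}_{(kl),(pq)} = |⟨Φ_kl| (W_cd ⊗ W_ef) |Φ_pq⟩|²` is the local cyclic
permutation matrix `X_n^{e−c} ⊗ X_n^{d+f}`. -/
theorem weyl_bell_overlap (n : ℕ) [NeZero n] (c d e f : ZMod n) :
    (∀ k l p q : ZMod n,
      Complex.normSq
          (star (belld n k l) ⬝ᵥ ((Wd n c d ⊗ₖ Wd n e f) *ᵥ belld n p q)) =
        if k = p + e - c ∧ l = q + d + f then 1 else 0) ∧
    (Matrix.of fun kl pq : ZMod n × ZMod n =>
        Complex.normSq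
          (star (belld n kl.1 kl.2) ⬝ᵥ
            ((Wd n c d ⊗ₖ Wd n e f) *ᵥ belld n pq.1 pq.2))) =
      localCycMat n (e - c) (d + f) := by
  have h1 : ∀ k l p q : ZMod n,
      Complex.normSq
          (star (belld n k l) ⬝ᵥ ((Wd n c d ⊗ₖ Wd n e f) *ᵥ belld n p q)) =
        if k = p + e - c ∧ l = q + d + f then 1 else 0 := by
    intro k l p q
    rw [amp]
    split_ifs
    · exact ee_normSq n _
    · simp
  refine ⟨h1, ?_⟩
  ext ⟨k, l⟩ ⟨p, q⟩
  show Complex.normSq _ = _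
  rw [h1 k l p q]
  simp only [localCycMat, Matrix.of_apply]
  have : (k = p + e - c ∧ l = q + d + f) = (k = p + (e - c) ∧ l = q + (d + f)) := by
    have e1 : p + e - c = p + (e - c) := by ring
    have e2 : q + d + f = q + (d + f) := by ring
    rw [e1, e2]
  simp only [this]
end
end
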